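/- Let A be an n×n complex matrix such that every eigenvalue μ ∈ spectrum ℂ A satisfies Re μ ≠ 0, let U be a unitary n×n matrix, and suppose A = −(U ⬝ A ⬝ Uᴴ). Let F be a spectral sign of A, i.e. F⬝A = A⬝F, F⬝F = 1, and for every eigenvalue μ ∈ spectrum ℂ A and every v ∈ ℂⁿ with ((A − μ•1)^n) *ᵥ v = 0 one has F *ᵥ v = v if Re μ > 0 and F *ᵥ v = −v if Re μ < 0. Then F = −(U ⬝ F ⬝ Uᴴ). -/

import Mathlib

open Matrix

private lemma pow_apply_eq {n : ℕ} (B : Matrix (Fin n) (Fin n) ℂ) (μ : ℂ) (k : ℕ)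
    (v : Fin n → ℂ) :
    ((Matrix.toLinAlgEquiv' B - μ • 1) ^ k) v = ((B - μ • 1) ^ k) *ᵥ v := by
  have h : Matrix.toLinAlgEquiv' (B - μ • 1) = Matrix.toLinAlgEquiv' B - μ • 1 := by
    rw [map_sub, _root_.map_smul]
    exact congrArg (fun X => Matrix.toLinAlgEquiv' B - μ • X) (_root_.map_one (Matrix.toLinAlgEquiv' :
      Matrix (Fin n) (Fin n) ℂ ≃ₐ[ℂ] ((Fin n → ℂ) →ₗ[ℂ] (Fin n → ℂ))))
  rw [← h, ← map_pow, Matrix.toLinAlgEquiv'_apply]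

private lemma mem_spec_of_gen {n : ℕ} (B : Matrix (Fin n) (Fin n) ℂ) (μ : ℂ)
    (v : Fin n → ℂ) (hv : v ≠ 0) (h : ((B - μ • 1) ^ n) *ᵥ v = 0) :
    μ ∈ spectrum ℂ B := by
  set f : Module.End ℂ (Fin n → ℂ) := Matrix.toLinAlgEquiv' B with hf
  have hmem : v ∈ f.genEigenspace μ (n : ℕ) := by
    rw [Module.End.mem_genEigenspace_nat, LinearMap.mem_ker, pow_apply_eq, h]
  have hgen : f.HasGenEigenvalue μ n := by
    rw [Module.End.hasGenEigenvalue_iff]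
    exact Submodule.ne_bot_iff _ |>.2 ⟨v, hmem, hv⟩
  have heig := Module.End.hasEigenvalue_of_hasGenEigenvalue hgen
  have := heig.mem_spectrum
  rwa [AlgEquiv.spectrum_eq Matrix.toLinAlgEquiv' B] at this

theorem stmt_14 {n : ℕ} (A U F : Matrix (Fin n) (Fin n) ℂ)
    (hA : ∀ μ ∈ spectrum ℂ A, μ.re ≠ 0)
    (hU : U ∈ Matrix.unitaryGroup (Fin n) ℂ)
    (hsym : A = -(U * A * Uᴴ))
    (hFA : F * A = A * F) (hFF : F * F = 1)
    (hF : ∀ μ ∈ spectrum ℂ A, ∀ v : Fin n → ℂ, ((A - μ • 1) ^ n) *ᵥ v = 0 →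
      (0 < μ.re → F *ᵥ v = v) ∧ (μ.re < 0 → F *ᵥ v = -v)) :
    F = -(U * F * Uᴴ) := by
  have h1 : Uᴴ * U = 1 := by
    have := hU.1; simpa [Matrix.star_eq_conjTranspose] using this
  have h2 : U * Uᴴ = 1 := by
    have := hU.2; simpa [Matrix.star_eq_conjTranspose] using this
  -- anti-commutation
  have hUA : Uᴴ * A = -(A * Uᴴ) := by
    conv_lhs => rw [hsym]
    simp [Matrix.mul_neg, ← Matrix.mul_assoc, h1]
  have hconj : ∀ (μ : ℂ) (k : ℕ),
      Uᴴ * (A - μ • 1) ^ k = ((-1 : ℂ) ^ k) • ((A + μ • 1) ^ k * Uᴴ) := by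
    intro μ k
    induction k with
    | zero => simp
    | succ k ih =>
      rw [pow_succ, ← Matrix.mul_assoc, ih, Matrix.smul_mul, Matrix.mul_assoc]
      have hstep : Uᴴ * (A - μ • 1) = -((A + μ • 1) * Uᴴ) := by
        rw [Matrix.mul_sub, Matrix.add_mul, hUA]
        rw [Matrix.mul_smul, Matrix.smul_mul, Matrix.mul_one, Matrix.one_mul]
        abel
      rw [hstep, Matrix.mul_neg, ← Matrix.mul_assoc, ← pow_succ, pow_succ (-1 : ℂ),
        mul_smul, neg_one_smul]
  set f : Module.End ℂ (Fin n → ℂ) := Matrix.toLinAlgEquiv' A with hfdef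
  -- key pointwise statement on generalized eigenspaces
  have key : ∀ μ : ℂ, ∀ v ∈ f.maxGenEigenspace μ, F *ᵥ v = (-(U * F * Uᴴ)) *ᵥ v := by
    intro μ v hv
    by_cases hv0 : v = 0
    · simp [hv0]
    have hvn : ((A - μ • 1) ^ n) *ᵥ v = 0 := by
      rw [Module.End.maxGenEigenspace_eq_genEigenspace_finrank] at hv
      rw [show Module.finrank ℂ (Fin n → ℂ) = n from Module.finrank_fin_fun ℂ] at hv
      rw [Module.End.mem_genEigenspace_nat, LinearMap.mem_ker, pow_apply_eq] at hv
      exact hv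
    have hμ : μ ∈ spectrum ℂ A := mem_spec_of_gen A μ v hv0 hvn
    -- the transformed vector
    set w : Fin n → ℂ := Uᴴ *ᵥ v with hw
    have hw0 : w ≠ 0 := by
      intro h
      apply hv0
      have : U *ᵥ w = U *ᵥ 0 := by rw [h]
      rwa [hw, Matrix.mulVec_mulVec, h2, Matrix.one_mulVec, Matrix.mulVec_zero] at this
    have hwn : ((A - (-μ) • 1) ^ n) *ᵥ w = 0 := by
      have : A - (-μ) • 1 = A + μ • 1 := by rw [neg_smul, sub_neg_eq_add]
      rw [this, hw, Matrix.mulVec_mulVec]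
      have hc := hconj μ n
      have : (A + μ • 1) ^ n * Uᴴ = ((-1 : ℂ) ^ n) • (Uᴴ * (A - μ • 1) ^ n) := by
        rw [hc, smul_smul, ← pow_add, ← two_mul, pow_mul]
        norm_num
      rw [this, Matrix.smul_mulVec, ← Matrix.mulVec_mulVec, hvn,
        Matrix.mulVec_zero, smul_zero]
    have hμ' : -μ ∈ spectrum ℂ A := mem_spec_of_gen A (-μ) w hw0 hwn
    have hre := hA μ hμ
    rcases lt_or_gt_of_ne hre with hlt | hgt
    · -- μ.re < 0 : F v = -v, F w = w (since (-μ).re > 0)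
      have h3 : F *ᵥ v = -v := (hF μ hμ v hvn).2 hlt
      have h4 : F *ᵥ w = w := (hF (-μ) hμ' w hwn).1 (by simpa using hlt)
      rw [h3, Matrix.neg_mulVec, ← Matrix.mulVec_mulVec, ← Matrix.mulVec_mulVec, ← hw,
        h4, hw, Matrix.mulVec_mulVec, h2, Matrix.one_mulVec]
    · -- μ.re > 0 : F v = v, F w = -w
      have h3 : F *ᵥ v = v := (hF μ hμ v hvn).1 hgt
      have h4 : F *ᵥ w = -w := (hF (-μ) hμ' w hwn).2 (by simpa using hgt)
      rw [h3, Matrix.neg_mulVec, ← Matrix.mulVec_mulVec, ← Matrix.mulVec_mulVec, ← hw,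
        h4, Matrix.mulVec_neg, hw, Matrix.mulVec_mulVec, h2, Matrix.one_mulVec, neg_neg]
  -- all of space is spanned by generalized eigenspaces
  have htop : (⨆ μ : ℂ, f.maxGenEigenspace μ) = ⊤ :=
    Module.End.iSup_maxGenEigenspace_eq_top f
  have hall : ∀ v : Fin n → ℂ, F *ᵥ v = (-(U * F * Uᴴ)) *ᵥ v := by
    have hle : (⨆ μ : ℂ, f.maxGenEigenspace μ) ≤
        LinearMap.ker (Matrix.mulVecLin F - Matrix.mulVecLin (-(U * F * Uᴴ))) := by
      refine iSup_le fun μ v hv => ?_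
      rw [LinearMap.mem_ker, LinearMap.sub_apply, sub_eq_zero]
      exact key μ v hv
    rw [htop, top_le_iff, LinearMap.ker_eq_top, sub_eq_zero] at hle
    intro v
    have := congrFun (congrArg (fun g => g.toFun) hle) v
    exact this
  have : Matrix.toLinAlgEquiv' F = Matrix.toLinAlgEquiv' (-(U * F * Uᴴ)) := by
    apply LinearMap.ext
    intro v
    rw [show (Matrix.toLinAlgEquiv' F : Module.End ℂ (Fin n → ℂ)) v = F *ᵥ v from rfl,
      show (Matrix.toLinAlgEquiv' (-(U * F * Uᴴ)) : Module.End ℂ (Fin n → ℂ)) v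
        = (-(U * F * Uᴴ)) *ᵥ v from rfl]
    exact hall v
  exact Matrix.toLinAlgEquiv'.injective this
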